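/- Let B, c₂, c₃ ∈ ℝ and define P(α,β) := 1/(4π) − (3/(8π)) sin²β cos(2α) · B + [ (3/(16π)) sin⁴β cos(4α) + c₂ sin²β cos(2α) + c₃ sin²β sin(2α) ] · B². Then, with d(α,β) = (cos α sin β, sin α sin β, cos β), the sphere average of d₁ d₂ against P satisfies ∫₀^{2π} ∫₀^{π} d₁(α,β) d₂(α,β) P(α,β) sin β dβ dα = (8π/15) c₃ B². -/

import Mathlib

open MeasureTheory intervalIntegral

/-- The truncated asymptotic expansion (in the Bretherton constant `B`) of the
steady-state orientation distribution. -/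
noncomputable def Pexp (B c₂ c₃ α β : ℝ) : ℝ :=
  1 / (4 * Real.pi)
    - 3 / (8 * Real.pi) * Real.sin β ^ 2 * Real.cos (2 * α) * B
    + (3 / (16 * Real.pi) * Real.sin β ^ 4 * Real.cos (4 * α)
        + c₂ * Real.sin β ^ 2 * Real.cos (2 * α)
        + c₃ * Real.sin β ^ 2 * Real.sin (2 * α)) * B ^ 2

open Real in
lemma sin_pow3_int : ∫ x in (0:ℝ)..π, sin x ^ 3 = 4/3 := by
  rw [integral_sin_pow (n := 1)]
  simp; norm_num

open Real in
lemma sin_pow5_int : ∫ x in (0:ℝ)..π, sin x ^ 5 = 16/15 := by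
  rw [integral_sin_pow (n := 3)]
  simp [sin_pow3_int]; norm_num

open Real in
lemma sin_pow7_int : ∫ x in (0:ℝ)..π, sin x ^ 7 = 32/35 := by
  rw [integral_sin_pow (n := 5)]
  simp [sin_pow5_int]; norm_num

open Real in
lemma sin_mul_int (n : ℕ) (hn : (n:ℝ) ≠ 0) : ∫ x in (0:ℝ)..(2*π), sin (n*x) = 0 := by
  rw [integral_comp_mul_left (fun x => sin x) hn]
  simp [show (n:ℝ)*(2*π) = n*(2*π) by ring, Real.cos_nat_mul_two_pi]

open Real in
lemma sin_two_mul_sq_int : ∫ x in (0:ℝ)..(2*π), sin (2*x) ^ 2 = π := by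
  rw [integral_comp_mul_left (fun x => sin x ^ 2) two_ne_zero, integral_sin_sq]
  have : sin ((2:ℝ)*(2*π)) = 0 := by
    rw [show (2:ℝ)*(2*π) = ((4:ℕ):ℝ)*π by push_cast; ring, Real.sin_nat_mul_pi]
  simp [this]

/-- The sphere average of `d₁ d₂` against the truncated
expansion `P` equals `(8π/15) c₃ B²`. -/
theorem shear_stress_average (B c₂ c₃ : ℝ) :
    (∫ α in (0:ℝ)..(2 * Real.pi), ∫ β in (0:ℝ)..Real.pi,
        (Real.cos α * Real.sin β) * (Real.sin α * Real.sin β)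
          * Pexp B c₂ c₃ α β * Real.sin β)
      = 8 * Real.pi / 15 * c₃ * B ^ 2 := by
  have pi_ne : Real.pi ≠ 0 := Real.pi_ne_zero
  set A : ℝ := 1 / (3 * Real.pi) with hA
  set E : ℝ := 32/35 * (3 / (16 * Real.pi) * B ^ 2) with hE
  have hinner : ∀ α : ℝ,
      (∫ β in (0:ℝ)..Real.pi,
        (Real.cos α * Real.sin β) * (Real.sin α * Real.sin β)
          * Pexp B c₂ c₃ α β * Real.sin β)
      = (A / 2 - E / 4) * Real.sin (2*α)
        + 16/15 * (-(3 / (8 * Real.pi)) * B + c₂ * B ^ 2) / 4 * Real.sin (4*α)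
        + E / 4 * Real.sin (6*α)
        + 16/15 * (c₃ * B ^ 2) / 2 * Real.sin (2*α) ^ 2 := by
    intro α
    have hfun : ∀ β : ℝ,
        (Real.cos α * Real.sin β) * (Real.sin α * Real.sin β)
          * Pexp B c₂ c₃ α β * Real.sin β
        = (Real.cos α * Real.sin α * (1 / (4 * Real.pi))) * Real.sin β ^ 3
          + (Real.cos α * Real.sin α *
              (-(3 / (8 * Real.pi)) * Real.cos (2*α) * B
                + (c₂ * Real.cos (2*α) + c₃ * Real.sin (2*α)) * B ^ 2)) * Real.sin β ^ 5
          + (Real.cos α * Real.sin α *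
              (3 / (16 * Real.pi) * Real.cos (4*α) * B ^ 2)) * Real.sin β ^ 7 := by
      intro β; unfold Pexp; ring
    have hi : ∀ n : ℕ, IntervalIntegrable (fun β : ℝ => Real.sin β ^ n)
        volume 0 Real.pi := fun n => (Real.continuous_sin.pow n).intervalIntegrable 0 Real.pi
    simp only [hfun]
    rw [intervalIntegral.integral_add (((hi 3).const_mul _).add ((hi 5).const_mul _))
          ((hi 7).const_mul _),
        intervalIntegral.integral_add ((hi 3).const_mul _) ((hi 5).const_mul _),
        intervalIntegral.integral_const_mul, intervalIntegral.integral_const_mul,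
        intervalIntegral.integral_const_mul, sin_pow3_int, sin_pow5_int, sin_pow7_int]
    have e6 : Real.sin (6*α) = Real.sin (2*α) * Real.cos (4*α)
        + Real.cos (2*α) * Real.sin (4*α) := by
      rw [show (6:ℝ)*α = 2*α + 4*α by ring, Real.sin_add]
    have e4 : Real.sin (4*α) = 2 * Real.sin (2*α) * Real.cos (2*α) := by
      rw [show (4:ℝ)*α = 2*(2*α) by ring, Real.sin_two_mul]
    have ec4 : Real.cos (4*α) = 2 * Real.cos (2*α) ^ 2 - 1 := by
      rw [show (4:ℝ)*α = 2*(2*α) by ring, Real.cos_two_mul]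
    have e2 : Real.sin (2*α) = 2 * Real.sin α * Real.cos α := Real.sin_two_mul α
    rw [e6, e4, ec4, e2, hE, hA]
    field_simp
    ring
  simp only [hinner]
  have hi2 : ∀ n : ℕ, IntervalIntegrable (fun α : ℝ => Real.sin ((n:ℝ)*α))
      volume 0 (2*Real.pi) := fun n =>
    (Real.continuous_sin.comp (continuous_const.mul continuous_id)).intervalIntegrable _ _
  have hisq : IntervalIntegrable (fun α : ℝ => Real.sin (2*α) ^ 2)
      volume 0 (2*Real.pi) :=
    ((Real.continuous_sin.comp (continuous_const.mul continuous_id)).pow 2).intervalIntegrable _ _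
  have h2 : ∫ α in (0:ℝ)..(2*Real.pi), Real.sin (2*α) = 0 := by
    have := sin_mul_int 2 (by norm_num); simpa using this
  have h4 : ∫ α in (0:ℝ)..(2*Real.pi), Real.sin (4*α) = 0 := by
    have := sin_mul_int 4 (by norm_num); simpa using this
  have h6 : ∫ α in (0:ℝ)..(2*Real.pi), Real.sin (6*α) = 0 := by
    have := sin_mul_int 6 (by norm_num); simpa using this
  have h2' : IntervalIntegrable (fun α : ℝ => Real.sin (2*α)) volume 0 (2*Real.pi) := by
    simpa using hi2 2
  have h4' : IntervalIntegrable (fun α : ℝ => Real.sin (4*α)) volume 0 (2*Real.pi) := by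
    simpa using hi2 4
  have h6' : IntervalIntegrable (fun α : ℝ => Real.sin (6*α)) volume 0 (2*Real.pi) := by
    simpa using hi2 6
  rw [intervalIntegral.integral_add (((h2'.const_mul _).add (h4'.const_mul _)).add
        (h6'.const_mul _)) (hisq.const_mul _),
      intervalIntegral.integral_add ((h2'.const_mul _).add (h4'.const_mul _)) (h6'.const_mul _),
      intervalIntegral.integral_add (h2'.const_mul _) (h4'.const_mul _),
      intervalIntegral.integral_const_mul, intervalIntegral.integral_const_mul,
      intervalIntegral.integral_const_mul, intervalIntegral.integral_const_mul,
      h2, h4, h6, sin_two_mul_sq_int]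
  ring
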